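/- The group G₂ is torsion-free: every element of G₂ other than the identity has infinite order (equivalently, for every g ≠ 1 in G₂ and every integer n ≥ 1, gⁿ ≠ 1). -/

import Mathlib

/-- The group `G₂ = ⟨α, β, γ ∣ αβα⁻¹ = β⁻¹, βγβ⁻¹ = γ⁻¹⟩`, as the presented
group on three generators with relators `αβα⁻¹β` and `βγβ⁻¹γ`. -/
abbrev G₂ : Type :=
  PresentedGroup ({FreeGroup.of 0 * FreeGroup.of 1 * (FreeGroup.of 0)⁻¹ * FreeGroup.of 1,
    FreeGroup.of 1 * FreeGroup.of 2 * (FreeGroup.of 1)⁻¹ * FreeGroup.of 2} :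
    Set (FreeGroup (Fin 3)))

namespace FGTF

def Monoid.IsTorsionFree (G : Type*) [Monoid G] : Prop :=
  ∀ g : G, g ≠ 1 → ¬IsOfFinOrder g

section Part1

open FreeGroup List

variable {α : Type*} [DecidableEq α]

abbrev R : α × Bool → α × Bool → Prop := fun a b => ¬(a.1 = b.1 ∧ a.2 = !b.2)

def Reduced (L : List (α × Bool)) : Prop := List.Chain' R L

theorem reduced_reduce (L : List (α × Bool)) : Reduced (reduce L) := by
  induction L with
  | nil => simp [Reduced, List.Chain']
  | cons x L ih =>
    rw [reduce.cons]
    rcases h : reduce L with _ | ⟨hd, tl⟩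
    · simp [Reduced, List.Chain']
    · rw [h] at ih
      dsimp only
      split_ifs with hc
      · exact ih.tail
      · exact List.isChain_cons_cons.2 ⟨hc, ih⟩

theorem Reduced.reduce_eq {L : List (α × Bool)} (h : Reduced L) : reduce L = L := by
  induction L with
  | nil => rfl
  | cons x L ih =>
    have hL : Reduced L := h.tail
    rw [reduce.cons, ih hL]
    cases L with
    | nil => rfl
    | cons hd tl =>
      have hr : R x hd := (List.isChain_cons_cons.1 h).1
      dsimp only
      rw [if_neg hr]

theorem reduced_toWord (x : FreeGroup α) : Reduced x.toWord := by
  rw [← reduce_toWord]; exact reduced_reduce _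

def Cyc (L : List (α × Bool)) : Prop :=
  Reduced L ∧ ∀ a ∈ L.head?, ∀ b ∈ L.getLast?, R b a

theorem cyc_flatten {L : List (α × Bool)} (h : Cyc L) (hne : L ≠ []) :
    ∀ n : ℕ, Reduced (List.flatten (List.replicate n L)) ∧
      ∀ a ∈ (List.flatten (List.replicate n L)).head?, a ∈ L.head? := by
  intro n
  induction n with
  | zero => simp [Reduced, List.Chain']
  | succ n ih =>
    rw [List.replicate_succ, List.flatten_cons]
    constructor
    · refine List.isChain_append.2 ⟨h.1, ih.1, ?_⟩
      intro x hx y hy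
      exact h.2 y (ih.2 y hy) x hx
    · cases L with
      | nil => exact absurd rfl hne
      | cons z t => intro a ha; simpa using ha

theorem mk_pow_ne_one {L : List (α × Bool)} (h : Cyc L) (hne : L ≠ []) {n : ℕ} (hn : 1 ≤ n) :
    FreeGroup.mk L ^ n ≠ 1 := by
  rw [FreeGroup.pow_mk]
  intro hcon
  have hred := ((cyc_flatten h hne n).1).reduce_eq
  have htw : (FreeGroup.mk (List.flatten (List.replicate n L))).toWord
      = List.flatten (List.replicate n L) := by
    rw [FreeGroup.toWord_mk, hred]
  rw [hcon, FreeGroup.toWord_one] at htw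
  obtain ⟨m, rfl⟩ : ∃ m, n = m + 1 := ⟨n - 1, by omega⟩
  rw [List.replicate_succ, List.flatten_cons] at htw
  exact hne (List.append_eq_nil_iff.1 htw.symm).1

theorem cyc_decomp : ∀ (n : ℕ) (L : List (α × Bool)), L.length ≤ n → Reduced L →
    ∃ (y : FreeGroup α) (c : List (α × Bool)),
      FreeGroup.mk L = y * FreeGroup.mk c * y⁻¹ ∧ Cyc c ∧ (L ≠ [] → c ≠ []) := by
  intro n
  induction n with
  | zero =>
    intro L hl _
    have hL0 : L = [] := List.length_eq_zero_iff.1 (Nat.le_zero.1 hl)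
    subst hL0
    exact ⟨1, [], by simp, ⟨List.isChain_nil, by simp⟩, fun h => absurd rfl h⟩
  | succ n ih =>
    intro L hl hred
    by_cases hcyc : ∀ a ∈ L.head?, ∀ b ∈ L.getLast?, R b a
    · exact ⟨1, L, by simp, ⟨hred, hcyc⟩, fun h => h⟩
    · push_neg at hcyc
      obtain ⟨a, ha, b, hb, hR⟩ := hcyc
      obtain ⟨hb1, hb2⟩ : b.1 = a.1 ∧ b.2 = !a.2 := by tauto
      cases L with
      | nil => simp at ha
      | cons a0 T =>
        rw [← (by simpa using ha : a0 = a)] at hb1 hb2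
        rcases T.eq_nil_or_concat with h0 | ⟨M, d, rfl⟩
        · subst h0
          have hba : a0 = b := by simpa using hb
          rw [← hba] at hb2
          exact absurd hb2 (by simp)
        · simp only [List.concat_eq_append] at hl hred hb ⊢
          have hbd : d = b := by
            have heq : (a0 :: (M ++ [d])) = (a0 :: M) ++ [d] := by simp
            rw [heq, List.getLast?_concat] at hb
            simpa using hb
          subst hbd
          have hd : d = (a0.1, !a0.2) := Prod.ext hb1 hb2
          have hM : Reduced M := hred.infix ⟨[a0], [d], by simp⟩
          have hMne : M ≠ [] := by
            rintro rfl
            have h2 : List.Chain' R [a0, d] := by simpa [Reduced] using hred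
            exact (List.isChain_cons_cons.1 h2).1 ⟨hb1.symm, by rw [hb2, Bool.not_not]⟩
          obtain ⟨y, c, hyc, hcyc', hcne⟩ := ih M (by simp at hl; omega) hM
          refine ⟨FreeGroup.mk [a0] * y, c, ?_, hcyc', fun _ => hcne hMne⟩
          have hsplit : FreeGroup.mk (a0 :: (M ++ [d]))
              = FreeGroup.mk [a0] * FreeGroup.mk M * FreeGroup.mk [d] := by
            rw [FreeGroup.mul_mk, FreeGroup.mul_mk]; simp
          have hinv : FreeGroup.mk [d] = (FreeGroup.mk [a0])⁻¹ := by
            rw [FreeGroup.inv_mk]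
            congr 1
            simp [FreeGroup.invRev, hd]
          rw [hsplit, hyc, hinv]
          group

theorem freeGroup_isTorsionFree : Monoid.IsTorsionFree (FreeGroup α) := by
  intro x hx hfin
  obtain ⟨n, hn, hxn⟩ := isOfFinOrder_iff_pow_eq_one.1 hfin
  obtain ⟨y, c, hyc, hcyc, hcne⟩ := cyc_decomp x.toWord.length x.toWord le_rfl (reduced_toWord x)
  rw [FreeGroup.mk_toWord] at hyc
  have hLne : x.toWord ≠ [] := fun h => hx (FreeGroup.toWord_eq_nil_iff.1 h)
  have hc := hcne hLne
  have hx' : x = MulAut.conj y (FreeGroup.mk c) := by rw [MulAut.conj_apply, ← hyc]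
  have : MulAut.conj y ((FreeGroup.mk c) ^ n) = 1 := by rw [map_pow, ← hx', hxn]
  have hcn : (FreeGroup.mk c) ^ n = 1 := by
    rwa [MulEquiv.map_eq_one_iff] at this
  exact mk_pow_ne_one hcyc hc hn hcn


end Part1

section Part2

open Multiplicative SemidirectProduct


section ConjLemmas

variable {G : Type*} [Group G]

theorem zpow_even_of_sq {a : G} (h : a * a = 1) {m : ℤ} (hm : Even m) : a ^ m = 1 := by
  obtain ⟨k, rfl⟩ := hm
  rw [show k + k = 2 * k by ring, zpow_mul, show a ^ (2:ℤ) = 1 by rw [zpow_two]; exact h, one_zpow]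

theorem zpow_odd_of_sq {a : G} (h : a * a = 1) {m : ℤ} (hm : Odd m) : a ^ m = a := by
  obtain ⟨k, rfl⟩ := hm
  rw [zpow_add, zpow_one, show (2:ℤ) * k = k + k by ring,
    zpow_even_of_sq h ⟨k, rfl⟩, one_mul]

theorem conj_zpow {a b : G} (h : a * b * a⁻¹ = b⁻¹) : ∀ m : ℤ,
    (Even m → a ^ m * b * a ^ (-m) = b) ∧ (Odd m → a ^ m * b * a ^ (-m) = b⁻¹) := by
  have h2 : a * b⁻¹ * a⁻¹ = b := by
    have e : a * b⁻¹ * a⁻¹ = (a * b * a⁻¹)⁻¹ := by group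
    rw [e, h, inv_inv]
  have h3 : a⁻¹ * b⁻¹ * a = b := by rw [← h]; group
  have h4 : a⁻¹ * b * a = b⁻¹ := by
    have e : a⁻¹ * b * a = (a⁻¹ * b⁻¹ * a)⁻¹ := by group
    rw [e, h3]
  intro m
  induction m using Int.induction_on with
  | zero => exact ⟨fun _ => by simp, fun h0 => absurd h0 (by simp)⟩
  | succ n ih =>
    have key : a ^ ((n : ℤ) + 1) * b * a ^ (-((n : ℤ) + 1))
        = a * (a ^ (n : ℤ) * b * a ^ (-(n : ℤ))) * a⁻¹ := by group
    constructor
    · intro he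
      have ho : Odd (n : ℤ) := by
        rw [Int.odd_iff]; rw [Int.even_iff] at he; omega
      rw [key, ih.2 ho, h2]
    · intro ho
      have he : Even (n : ℤ) := by
        rw [Int.even_iff]; rw [Int.odd_iff] at ho; omega
      rw [key, ih.1 he, h]
  | pred n ih =>
    have key : a ^ (-(n : ℤ) - 1) * b * a ^ (-(-(n : ℤ) - 1))
        = a⁻¹ * (a ^ (-(n : ℤ)) * b * a ^ (-(-(n : ℤ)))) * a := by group
    constructor
    · intro he
      have ho : Odd (-(n : ℤ)) := by
        rw [Int.odd_iff]; rw [Int.even_iff] at he; omega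
      rw [key, ih.2 ho, h3]
    · intro ho
      have he : Even (-(n : ℤ)) := by
        rw [Int.even_iff]; rw [Int.odd_iff] at ho; omega
      rw [key, ih.1 he, h4]

theorem conj_zpow_pow {a b : G} (h : a * b * a⁻¹ = b⁻¹) (m k : ℤ) :
    ∃ k' : ℤ, (Even k' ↔ Even k) ∧ a ^ m * b ^ k * a ^ (-m) = b ^ k' := by
  have hconj : a ^ m * b ^ k * a ^ (-m) = (a ^ m * b * a ^ (-m)) ^ k := by
    have := map_zpow (MulAut.conj (a ^ m)) b k
    simp only [MulAut.conj_apply] at this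
    rw [← zpow_neg] at this
    exact this
  rcases Int.even_or_odd m with hm | hm
  · exact ⟨k, Iff.rfl, by rw [hconj, (conj_zpow h m).1 hm]⟩
  · refine ⟨-k, even_neg, ?_⟩
    rw [hconj, (conj_zpow h m).2 hm, inv_zpow']

theorem conj_conj_even {a b c : G} (hab : a * b * a⁻¹ = b⁻¹) (hbc : b * c * b⁻¹ = c⁻¹)
    {k : ℤ} (j : ℤ) (hk : Even k) :
    b ^ k * (a ^ j * c * a ^ (-j)) * b ^ (-k) = a ^ j * c * a ^ (-j) := by
  obtain ⟨k', hk'iff, hk'⟩ := conj_zpow_pow hab (-j) k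
  have hc : b ^ k' * c * b ^ (-k') = c := (conj_zpow hbc k').1 (hk'iff.2 hk)
  calc b ^ k * (a ^ j * c * a ^ (-j)) * b ^ (-k)
      = a ^ j * ((a ^ (-j) * b ^ k * a ^ (-(-j))) * c
          * (a ^ (-j) * b ^ k * a ^ (-(-j)))⁻¹) * a ^ (-j) := by group
    _ = a ^ j * (b ^ k' * c * (b ^ k')⁻¹) * a ^ (-j) := by rw [hk']
    _ = a ^ j * (b ^ k' * c * b ^ (-k')) * a ^ (-j) := by group
    _ = a ^ j * c * a ^ (-j) := by rw [hc]

theorem conj_conj_odd {a b c : G} (hab : a * b * a⁻¹ = b⁻¹) (hbc : b * c * b⁻¹ = c⁻¹)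
    {k : ℤ} (j : ℤ) (hk : Odd k) :
    b ^ k * (a ^ j * c * a ^ (-j)) * b ^ (-k) = (a ^ j * c * a ^ (-j))⁻¹ := by
  obtain ⟨k', hk'iff, hk'⟩ := conj_zpow_pow hab (-j) k
  have hk'odd : Odd k' := by
    rw [Int.odd_iff]; rw [Int.odd_iff] at hk
    rw [Int.even_iff, Int.even_iff] at hk'iff
    omega
  have hc : b ^ k' * c * b ^ (-k') = c⁻¹ := (conj_zpow hbc k').2 hk'odd
  calc b ^ k * (a ^ j * c * a ^ (-j)) * b ^ (-k)
      = a ^ j * ((a ^ (-j) * b ^ k * a ^ (-(-j))) * c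
          * (a ^ (-j) * b ^ k * a ^ (-(-j)))⁻¹) * a ^ (-j) := by group
    _ = a ^ j * (b ^ k' * c * (b ^ k')⁻¹) * a ^ (-j) := by rw [hk']
    _ = a ^ j * (b ^ k' * c * b ^ (-k')) * a ^ (-j) := by group
    _ = a ^ j * c⁻¹ * a ^ (-j) := by rw [hc]
    _ = (a ^ j * c * a ^ (-j))⁻¹ := by group

end ConjLemmas

abbrev Mz : Type := Multiplicative ℤ

def iotaZ : MulAut Mz := MulEquiv.inv Mz

lemma iotaZ_sq : iotaZ * iotaZ = 1 := by
  ext x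
  simp [iotaZ]

def psiK : Mz →* MulAut Mz := zpowersHom _ iotaZ

abbrev K : Type := Mz ⋊[psiK] Mz

def shiftF : MulAut (FreeGroup ℤ) := FreeGroup.freeGroupCongr (Equiv.addRight (1:ℤ))

lemma shiftF_of (i : ℤ) : shiftF (FreeGroup.of i) = FreeGroup.of (i + 1) := by
  simp [shiftF, FreeGroup.freeGroupCongr, FreeGroup.map.of]

lemma shiftF_inv_of (i : ℤ) : shiftF⁻¹ (FreeGroup.of i) = FreeGroup.of (i - 1) := by
  have h : shiftF (FreeGroup.of (i - 1)) = FreeGroup.of i := by rw [shiftF_of]; congr 1; ring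
  rw [← h, MulAut.inv_apply_self]

def invHomF : FreeGroup ℤ →* FreeGroup ℤ := FreeGroup.lift fun i => (FreeGroup.of i)⁻¹

lemma invHomF_of (i : ℤ) : invHomF (FreeGroup.of i) = (FreeGroup.of i)⁻¹ := FreeGroup.lift_apply_of

lemma invHomF_invHomF (x : FreeGroup ℤ) : invHomF (invHomF x) = x := by
  have h : invHomF.comp invHomF = MonoidHom.id (FreeGroup ℤ) :=
    FreeGroup.ext_hom _ _ fun a => by simp [MonoidHom.comp_apply, invHomF_of]
  exact DFunLike.congr_fun h x

def invF : MulAut (FreeGroup ℤ) :=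
  { toFun := invHomF, invFun := invHomF, left_inv := invHomF_invHomF,
    right_inv := invHomF_invHomF, map_mul' := map_mul invHomF }

lemma invF_of (i : ℤ) : invF (FreeGroup.of i) = (FreeGroup.of i)⁻¹ := invHomF_of i

lemma invF_sq : invF * invF = 1 := by
  ext x
  exact invHomF_invHomF x

lemma invF_inv : invF⁻¹ = invF := inv_eq_of_mul_eq_one_right invF_sq

lemma mulAutF_ext {f g : MulAut (FreeGroup ℤ)}
    (h : ∀ i : ℤ, f (FreeGroup.of i) = g (FreeGroup.of i)) : f = g := by
  have h2 : MulEquiv.toMonoidHom f = MulEquiv.toMonoidHom g :=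
    FreeGroup.ext_hom _ _ fun a => by simpa using h a
  ext x
  exact DFunLike.congr_fun h2 x

lemma shiftF_invF_comm : shiftF * invF = invF * shiftF :=
  mulAutF_ext fun i => by
    rw [MulAut.mul_apply, MulAut.mul_apply, invF_of, shiftF_of, invF_of, map_inv, shiftF_of]

lemma shiftF_zpow_of : ∀ (m i : ℤ), (shiftF ^ m) (FreeGroup.of i) = FreeGroup.of (i + m) := by
  intro m
  induction m using Int.induction_on with
  | zero => intro i; simp
  | succ n ih =>
    intro i
    have e : shiftF ^ ((n : ℤ) + 1) = shiftF ^ (n : ℤ) * shiftF := by rw [zpow_add_one]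
    rw [e, MulAut.mul_apply, shiftF_of, ih]
    congr 1; ring
  | pred n ih =>
    intro i
    have e : shiftF ^ (-(n : ℤ) - 1) = shiftF ^ (-(n : ℤ)) * shiftF⁻¹ := by rw [zpow_sub_one]
    rw [e, MulAut.mul_apply, shiftF_inv_of, ih]
    congr 1; ring

lemma psiK_apply (g : Mz) : psiK g = iotaZ ^ g.toAdd := by
  simp [psiK, zpowersHom_apply]

def rho : K →* MulAut (FreeGroup ℤ) :=
  SemidirectProduct.lift (zpowersHom _ invF) (zpowersHom _ shiftF) (by
    intro g
    apply MonoidHom.ext_mint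
    simp only [MonoidHom.comp_apply, MulEquiv.coe_toMonoidHom, MulAut.conj_apply,
      zpowersHom_apply]
    have hcomm : Commute shiftF invF := shiftF_invF_comm
    have hR : shiftF ^ g.toAdd * invF ^ (ofAdd (1:ℤ)).toAdd * (shiftF ^ g.toAdd)⁻¹ = invF := by
      rw [show (ofAdd (1:ℤ)).toAdd = (1:ℤ) from rfl, zpow_one,
        (hcomm.zpow_left g.toAdd).eq, mul_inv_cancel_right]
    rw [hR, psiK_apply]
    rcases Int.even_or_odd g.toAdd with hm | hm
    · rw [zpow_even_of_sq iotaZ_sq hm]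
      simp
    · rw [zpow_odd_of_sq iotaZ_sq hm]
      have : iotaZ (ofAdd (1:ℤ)) = ofAdd (-1 : ℤ) := rfl
      rw [this, show (ofAdd (-1:ℤ)).toAdd = (-1:ℤ) from rfl, zpow_neg, zpow_one, invF_inv])

abbrev H : Type := FreeGroup ℤ ⋊[rho] K



theorem tf_Mz : Monoid.IsTorsionFree Mz := by
  intro g hg hfin
  obtain ⟨n, hn, h1⟩ := isOfFinOrder_iff_pow_eq_one.1 hfin
  apply hg
  have h2 : (g ^ n).toAdd = 0 := by rw [h1]; rfl
  rw [toAdd_pow, nsmul_eq_mul] at h2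
  rcases mul_eq_zero.1 h2 with h | h
  · exact absurd (by exact_mod_cast h) (by omega : (n : ℤ) ≠ 0).elim
  · have : g.toAdd = 0 := h
    exact toAdd_eq_zero.1 this

theorem tf_semidirect {N G : Type*} [Group N] [Group G] {φ : G →* MulAut N}
    (hN : Monoid.IsTorsionFree N) (hG : Monoid.IsTorsionFree G) :
    Monoid.IsTorsionFree (N ⋊[φ] G) := by
  intro g hg hfin
  obtain ⟨n, hn, h1⟩ := isOfFinOrder_iff_pow_eq_one.1 hfin
  have hr : rightHom g = 1 := by
    by_contra hne
    exact hG _ hne ((rightHom : N ⋊[φ] G →* G).isOfFinOrder hfin)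
  obtain ⟨w, rfl⟩ : ∃ w, inl w = g := by
    have hker : g ∈ rightHom.ker := hr
    rw [← range_inl_eq_ker_rightHom] at hker
    exact hker
  have hw : w ≠ 1 := fun h => hg (by rw [h, map_one])
  refine hN w hw (isOfFinOrder_iff_pow_eq_one.2 ⟨n, hn, ?_⟩)
  have hh : (inl (w ^ n) : N ⋊[φ] G) = inl 1 := by rw [map_pow, h1, map_one]
  exact inl_injective hh

theorem tf_H : Monoid.IsTorsionFree H :=
  tf_semidirect freeGroup_isTorsionFree (tf_semidirect tf_Mz tf_Mz)

abbrev rels2 : Set (FreeGroup (Fin 3)) :=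
  {FreeGroup.of 0 * FreeGroup.of 1 * (FreeGroup.of 0)⁻¹ * FreeGroup.of 1,
    FreeGroup.of 1 * FreeGroup.of 2 * (FreeGroup.of 1)⁻¹ * FreeGroup.of 2}

def A : PresentedGroup rels2 := PresentedGroup.of 0
def Bg : PresentedGroup rels2 := PresentedGroup.of 1
def Cg : PresentedGroup rels2 := PresentedGroup.of 2

lemma mk_rel {r : FreeGroup (Fin 3)} (hr : r ∈ rels2) : PresentedGroup.mk rels2 r = 1 :=
  (QuotientGroup.eq_one_iff r).2 (Subgroup.subset_normalClosure hr)

lemma relAB' : A * Bg * A⁻¹ * Bg = 1 := by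
  have h := mk_rel (show (FreeGroup.of 0 * FreeGroup.of 1 * (FreeGroup.of 0)⁻¹ * FreeGroup.of 1 :
    FreeGroup (Fin 3)) ∈ rels2 from Or.inl rfl)
  rw [map_mul, map_mul, map_mul, map_inv] at h
  exact h

lemma relBC' : Bg * Cg * Bg⁻¹ * Cg = 1 := by
  have h := mk_rel (show (FreeGroup.of 1 * FreeGroup.of 2 * (FreeGroup.of 1)⁻¹ * FreeGroup.of 2 :
    FreeGroup (Fin 3)) ∈ rels2 from Or.inr rfl)
  rw [map_mul, map_mul, map_mul, map_inv] at h
  exact h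

lemma relAB : A * Bg * A⁻¹ = Bg⁻¹ := eq_inv_of_mul_eq_one_left relAB'
lemma relBC : Bg * Cg * Bg⁻¹ = Cg⁻¹ := eq_inv_of_mul_eq_one_left relBC'

def fN : FreeGroup ℤ →* PresentedGroup rels2 :=
  FreeGroup.lift fun i => A ^ i * Cg * A ^ (-i)

lemma fN_of (i : ℤ) : fN (FreeGroup.of i) = A ^ i * Cg * A ^ (-i) := FreeGroup.lift_apply_of

def gK : K →* PresentedGroup rels2 :=
  SemidirectProduct.lift (zpowersHom _ Bg) (zpowersHom _ A) (by
    intro g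
    apply MonoidHom.ext_mint
    simp only [MonoidHom.comp_apply, MulEquiv.coe_toMonoidHom, MulAut.conj_apply,
      zpowersHom_apply, toAdd_ofAdd, zpow_one]
    rw [psiK_apply]
    rcases Int.even_or_odd g.toAdd with hm | hm
    · rw [zpow_even_of_sq iotaZ_sq hm]
      have h := (conj_zpow relAB g.toAdd).1 hm
      rw [zpow_neg] at h
      simpa using h.symm
    · rw [zpow_odd_of_sq iotaZ_sq hm]
      have h := (conj_zpow relAB g.toAdd).2 hm
      rw [zpow_neg] at h
      have hL : iotaZ (ofAdd (1:ℤ)) = ofAdd (-1:ℤ) := rfl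
      rw [hL, toAdd_ofAdd, zpow_neg, zpow_one]
      exact h.symm)

lemma gK_inl (u : Mz) : gK (inl u) = Bg ^ u.toAdd := by
  simp [gK, zpowersHom_apply]

lemma gK_inr (v : Mz) : gK (inr v) = A ^ v.toAdd := by
  simp [gK, zpowersHom_apply]

lemma rho_inl (u : Mz) : rho (inl u) = invF ^ u.toAdd := by
  simp [rho, zpowersHom_apply]

lemma rho_inr (v : Mz) : rho (inr v) = shiftF ^ v.toAdd := by
  simp [rho, zpowersHom_apply]

def psiH : H →* PresentedGroup rels2 :=
  SemidirectProduct.lift fN gK (by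
    intro g
    obtain ⟨u, v⟩ := g
    apply FreeGroup.ext_hom
    intro i
    simp only [MonoidHom.comp_apply, MulEquiv.coe_toMonoidHom, MulAut.conj_apply]
    have hrho : (rho ⟨u, v⟩ : MulAut (FreeGroup ℤ)) = invF ^ u.toAdd * shiftF ^ v.toAdd := by
      rw [mk_eq_inl_mul_inr, map_mul, rho_inl, rho_inr]
    have hgK2 : gK ⟨u, v⟩ = Bg ^ u.toAdd * A ^ v.toAdd := by
      rw [mk_eq_inl_mul_inr, map_mul, gK_inl, gK_inr]
    rw [hrho, hgK2, MulAut.mul_apply, shiftF_zpow_of, fN_of]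
    rcases Int.even_or_odd u.toAdd with hk | hk
    · rw [zpow_even_of_sq invF_sq hk, MulAut.one_apply, fN_of]
      have heven := conj_conj_even relAB relBC (i + v.toAdd) hk
      calc A ^ (i + v.toAdd) * Cg * A ^ (-(i + v.toAdd))
          = Bg ^ u.toAdd * (A ^ (i + v.toAdd) * Cg * A ^ (-(i + v.toAdd)))
            * Bg ^ (-u.toAdd) := heven.symm
        _ = Bg ^ u.toAdd * A ^ v.toAdd * (A ^ i * Cg * A ^ (-i))
            * (Bg ^ u.toAdd * A ^ v.toAdd)⁻¹ := by group
    · rw [zpow_odd_of_sq invF_sq hk, invF_of, map_inv, fN_of]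
      have hodd := conj_conj_odd relAB relBC (i + v.toAdd) hk
      calc (A ^ (i + v.toAdd) * Cg * A ^ (-(i + v.toAdd)))⁻¹
          = Bg ^ u.toAdd * (A ^ (i + v.toAdd) * Cg * A ^ (-(i + v.toAdd)))
            * Bg ^ (-u.toAdd) := hodd.symm
        _ = Bg ^ u.toAdd * A ^ v.toAdd * (A ^ i * Cg * A ^ (-i))
            * (Bg ^ u.toAdd * A ^ v.toAdd)⁻¹ := by group)

def fGen : Fin 3 → H := fun i =>
  if i = 0 then inr (inr (ofAdd (1:ℤ)))
  else if i = 1 then inr (inl (ofAdd (1:ℤ)))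
  else inl (FreeGroup.of (0:ℤ))

lemma psiK_one_one : psiK (ofAdd (1:ℤ)) (ofAdd (1:ℤ)) = ofAdd (-1:ℤ) := by
  rw [psiK_apply, toAdd_ofAdd, zpow_one]
  rfl

lemma key1 : (inr (ofAdd (1:ℤ)) : K) * inl (ofAdd (1:ℤ)) * (inr (ofAdd (1:ℤ)))⁻¹
    * inl (ofAdd (1:ℤ)) = 1 := by
  calc (inr (ofAdd (1:ℤ)) : K) * inl (ofAdd (1:ℤ)) * (inr (ofAdd (1:ℤ)))⁻¹ * inl (ofAdd (1:ℤ))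
      = (inr (ofAdd (1:ℤ)) * inl (ofAdd (1:ℤ)) * inr (ofAdd (1:ℤ))⁻¹) * inl (ofAdd (1:ℤ)) := by
        rw [map_inv]
    _ = inl (psiK (ofAdd (1:ℤ)) (ofAdd (1:ℤ))) * inl (ofAdd (1:ℤ)) := by rw [← inl_aut]
    _ = inl (ofAdd (-1:ℤ) * ofAdd (1:ℤ)) := by rw [psiK_one_one, map_mul]
    _ = 1 := by
        rw [show ofAdd (-1:ℤ) * ofAdd (1:ℤ) = 1 by rw [← ofAdd_add]; norm_num, map_one]

lemma rho_inl_one_of0 : rho (inl (ofAdd (1:ℤ))) (FreeGroup.of (0:ℤ)) = (FreeGroup.of (0:ℤ))⁻¹ := by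
  rw [rho_inl, toAdd_ofAdd, zpow_one, invF_of]

lemma key2 : (inr (inl (ofAdd (1:ℤ))) : H) * inl (FreeGroup.of (0:ℤ))
    * (inr (inl (ofAdd (1:ℤ))))⁻¹ * inl (FreeGroup.of (0:ℤ)) = 1 := by
  calc (inr (inl (ofAdd (1:ℤ))) : H) * inl (FreeGroup.of (0:ℤ)) * (inr (inl (ofAdd (1:ℤ))))⁻¹
        * inl (FreeGroup.of (0:ℤ))
      = (inr (inl (ofAdd (1:ℤ))) * inl (FreeGroup.of (0:ℤ)) * inr (inl (ofAdd (1:ℤ)))⁻¹)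
        * inl (FreeGroup.of (0:ℤ)) := by rw [map_inv]
    _ = inl (rho (inl (ofAdd (1:ℤ))) (FreeGroup.of (0:ℤ))) * inl (FreeGroup.of (0:ℤ)) := by
        rw [← inl_aut]
    _ = inl ((FreeGroup.of (0:ℤ))⁻¹ * FreeGroup.of (0:ℤ)) := by rw [rho_inl_one_of0, map_mul]
    _ = 1 := by rw [inv_mul_cancel, map_one]

lemma hrels : ∀ r ∈ rels2, FreeGroup.lift fGen r = 1 := by
  rintro r hr
  rcases hr with rfl | rfl
  · simp only [map_mul, map_inv, FreeGroup.lift_apply_of, fGen]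
    norm_num
    calc (inr (inr (ofAdd (1:ℤ))) : H) * inr (inl (ofAdd (1:ℤ))) * (inr (inr (ofAdd (1:ℤ))))⁻¹
          * inr (inl (ofAdd (1:ℤ)))
        = inr ((inr (ofAdd (1:ℤ)) : K) * inl (ofAdd (1:ℤ)) * (inr (ofAdd (1:ℤ)))⁻¹
          * inl (ofAdd (1:ℤ))) := by rw [map_mul, map_mul, map_mul, map_inv]
      _ = 1 := by rw [key1, map_one]
  · simp only [map_mul, map_inv, FreeGroup.lift_apply_of, fGen]
    norm_num
    exact key2

def phiG : PresentedGroup rels2 →* H := PresentedGroup.toGroup hrels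

lemma retract (g : PresentedGroup rels2) : psiH (phiG g) = g := by
  have h : psiH.comp phiG = MonoidHom.id _ := by
    apply PresentedGroup.ext
    intro x
    rw [MonoidHom.comp_apply, MonoidHom.id_apply]
    fin_cases x
    · show psiH (phiG (PresentedGroup.of (0 : Fin 3))) = PresentedGroup.of (0 : Fin 3)
      rw [show phiG (PresentedGroup.of 0) = fGen 0 from PresentedGroup.toGroup.of hrels]
      show psiH (inr (inr (ofAdd (1:ℤ)))) = _
      rw [show psiH (inr (inr (ofAdd (1:ℤ)))) = gK (inr (ofAdd (1:ℤ))) from by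
        simp [psiH], gK_inr, toAdd_ofAdd, zpow_one]
      rfl
    · show psiH (phiG (PresentedGroup.of (1 : Fin 3))) = PresentedGroup.of (1 : Fin 3)
      rw [show phiG (PresentedGroup.of 1) = fGen 1 from PresentedGroup.toGroup.of hrels]
      show psiH (inr (inl (ofAdd (1:ℤ)))) = _
      rw [show psiH (inr (inl (ofAdd (1:ℤ)))) = gK (inl (ofAdd (1:ℤ))) from by
        simp [psiH], gK_inl, toAdd_ofAdd, zpow_one]
      rfl
    · show psiH (phiG (PresentedGroup.of (2 : Fin 3))) = PresentedGroup.of (2 : Fin 3)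
      rw [show phiG (PresentedGroup.of 2) = fGen 2 from PresentedGroup.toGroup.of hrels]
      show psiH (inl (FreeGroup.of (0:ℤ))) = _
      rw [show psiH (inl (FreeGroup.of (0:ℤ))) = fN (FreeGroup.of (0:ℤ)) from by
        simp [psiH], fN_of]
      show A ^ (0:ℤ) * Cg * A ^ (-(0:ℤ)) = Cg
      simp
  exact DFunLike.congr_fun h g

theorem main (g : PresentedGroup rels2) (hg : g ≠ 1) (n : ℕ) (hn : 1 ≤ n) : g ^ n ≠ 1 := by
  intro hcon
  have hφ : phiG g ≠ 1 := fun h1 => hg (by rw [← retract g, h1, map_one])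
  have hpow : (phiG g) ^ n = 1 := by rw [← map_pow, hcon, map_one]
  exact tf_H _ hφ (isOfFinOrder_iff_pow_eq_one.2 ⟨n, hn, hpow⟩)


end Part2

end FGTF

/-- `G₂` is torsion-free: for every `g ≠ 1` and every `n ≥ 1`, `gⁿ ≠ 1`. -/
theorem G₂_torsion_free (g : G₂) (hg : g ≠ 1) (n : ℕ) (hn : 1 ≤ n) : g ^ n ≠ 1 :=
  FGTF.main g hg n hn
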